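/- Let n ≥ 1 and d = 2^n. Let S be the swap operator on ℂ^d⊗ℂ^d (S(u⊗v) = v⊗u), which equals (1/d)·Σ_P P⊗P where the sum ranges over all 4^n n-qubit Pauli strings P, so that Σ_{P≠I} P⊗P = d·S − I_{d²}. For ε ∈ [0,1), let N_ε be the depolarizing channel N_ε(ρ) = (1−ε)ρ + ε·tr(ρ)·I_d/d, and define the linear map C on d²×d² complex matrices by C(σ) = (1/d²)·tr(σ)·I_{d²} + (1/(d²(d²−1)))·tr[σ·(d·S − I_{d²})]·(d·S − I_{d²}). Then for every density matrix ρ on ℂ^d, tr[ρ²] = (1/(1−ε)²)·tr[S · C(N_ε(ρ) ⊗ N_ε(ρ))] − (1−(1−ε)²)/(d·(1−ε)²). -/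

import Mathlib

open Matrix BigOperators Kronecker ComplexOrder

noncomputable def swapOp (d : ℕ) : Matrix (Fin d × Fin d) (Fin d × Fin d) ℂ :=
  Matrix.of fun p q => if p.1 = q.2 ∧ p.2 = q.1 then 1 else 0

noncomputable def NdepD (d : ℕ) (ε : ℝ) (ρ : Matrix (Fin d) (Fin d) ℂ) :
    Matrix (Fin d) (Fin d) ℂ :=
  ((1 - ε : ℝ) : ℂ) • ρ + ((ε / d : ℝ) : ℂ) • ρ.trace • (1 : Matrix (Fin d) (Fin d) ℂ)

noncomputable def GD (d : ℕ) : Matrix (Fin d × Fin d) (Fin d × Fin d) ℂ :=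
  (d : ℂ) • swapOp d - 1

noncomputable def CdepD (d : ℕ) (σ : Matrix (Fin d × Fin d) (Fin d × Fin d) ℂ) :
    Matrix (Fin d × Fin d) (Fin d × Fin d) ℂ :=
  ((((d : ℝ) ^ 2)⁻¹ : ℝ) : ℂ) • σ.trace • (1 : Matrix (Fin d × Fin d) (Fin d × Fin d) ℂ)
    + ((((d : ℝ) ^ 2 * ((d : ℝ) ^ 2 - 1))⁻¹ : ℝ) : ℂ) • (σ * GD d).trace • GD d

lemma trace_swap (d : ℕ) : (swapOp d).trace = d := by
  have h : ∀ i j : Fin d, ((if i = j ∧ j = i then (1:ℂ) else 0)) = if j = i then 1 else 0 := by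
    intro i j; by_cases h : j = i <;> simp [h]
  simp only [Matrix.trace, Matrix.diag, swapOp, Matrix.of_apply]
  rw [Fintype.sum_prod_type]
  simp [h, Finset.sum_ite_eq]

lemma swap_mul_swap (d : ℕ) : swapOp d * swapOp d = 1 := by
  ext p q
  simp only [Matrix.mul_apply, swapOp, Matrix.of_apply, Fintype.sum_prod_type, ite_and,
    Matrix.one_apply, Finset.sum_ite_eq, Finset.sum_ite_eq', Finset.mem_univ, if_true]
  by_cases h1 : p.1 = q.1 <;> by_cases h2 : p.2 = q.2 <;>
    simp [h1, h2, Prod.ext_iff, eq_comm]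

lemma trace_swap_mul_kron {d : ℕ} (A B : Matrix (Fin d) (Fin d) ℂ) :
    (swapOp d * (A ⊗ₖ B)).trace = (A * B).trace := by
  simp only [Matrix.trace, Matrix.diag, Matrix.mul_apply, swapOp, Matrix.of_apply,
    kroneckerMap_apply, Fintype.sum_prod_type, ite_and, ite_mul, one_mul, zero_mul,
    Finset.sum_ite_eq, Finset.sum_ite_eq', Finset.mem_univ, if_true]
  rw [Finset.sum_comm]

theorem secondMoment_retriever_depolarizing_nqubit (n : ℕ) (hn : 1 ≤ n)
    (ε : ℝ) (hε : 0 ≤ ε) (hε1 : ε < 1)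
    (ρ : Matrix (Fin (2 ^ n)) (Fin (2 ^ n)) ℂ) (hρ : ρ.PosSemidef) (hρ1 : ρ.trace = 1) :
    (ρ ^ 2).trace
      = ((1 / (1 - ε) ^ 2 : ℝ) : ℂ) *
          (swapOp (2 ^ n) * CdepD (2 ^ n) (NdepD (2 ^ n) ε ρ ⊗ₖ NdepD (2 ^ n) ε ρ)).trace
        - (((1 - (1 - ε) ^ 2) / ((2 ^ n : ℝ) * (1 - ε) ^ 2) : ℝ) : ℂ) := by
  have hd2 : (2:ℝ) ≤ ((2^n : ℕ):ℝ) := by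
    have : 2 ≤ 2^n := by
      calc 2 = 2 ^ 1 := rfl
      _ ≤ 2 ^ n := Nat.pow_le_pow_right (by norm_num) hn
    exact_mod_cast this
  have hdR : ((2^n : ℕ):ℝ) ≠ 0 := by positivity
  have hdC : ((2^n : ℕ):ℂ) ≠ 0 := by
    simpa using (Nat.pos_of_ne_zero (by positivity)).ne'
  have hR1 : ((2^n : ℕ):ℝ)^2 - 1 ≠ 0 := by nlinarith
  have hC1 : ((2^n : ℕ):ℂ)^2 - 1 ≠ 0 := by
    have h := Complex.ofReal_ne_zero.mpr hR1
    push_cast at h ⊢; exact h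
  have hεR : (1 - ε : ℝ) ≠ 0 := by linarith
  have hεC : (1 - (ε:ℂ)) ≠ 0 := by
    have h := Complex.ofReal_ne_zero.mpr hεR
    push_cast at h; exact h
  set N := NdepD (2^n) ε ρ with hNdef
  have hNtr : N.trace = 1 := by
    rw [hNdef, NdepD, Matrix.trace_add, Matrix.trace_smul, Matrix.trace_smul, Matrix.trace_smul,
      Matrix.trace_one, hρ1]
    simp only [smul_eq_mul, Fintype.card_fin, one_mul, mul_one]
    push_cast
    rw [div_mul_cancel₀ _ (pow_ne_zero n two_ne_zero)]
    ring
  have hN' : N = ((1 - ε : ℝ) : ℂ) • ρ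
      + ((ε / (2^n : ℕ) : ℝ) : ℂ) • (1 : Matrix (Fin (2^n)) (Fin (2^n)) ℂ) := by
    rw [hNdef, NdepD, hρ1, one_smul]
  have hNN : (N * N).trace
      = ((1 - ε : ℝ) : ℂ)^2 * (ρ^2).trace
        + 2 * ((1 - ε : ℝ) : ℂ) * ((ε / (2^n : ℕ) : ℝ) : ℂ)
        + ((ε / (2^n : ℕ) : ℝ) : ℂ)^2 * ((2^n : ℕ):ℂ) := by
    rw [hN']
    simp only [pow_two, Matrix.add_mul, Matrix.mul_add, Matrix.smul_mul, Matrix.mul_smul,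
      Matrix.mul_one, Matrix.one_mul, Matrix.trace_add, Matrix.trace_smul, Matrix.trace_one, hρ1,
      smul_eq_mul, smul_smul, Fintype.card_fin]
    push_cast
    ring
  have hkron : ((N ⊗ₖ N) : Matrix (Fin (2^n) × Fin (2^n)) (Fin (2^n) × Fin (2^n)) ℂ).trace
      = 1 := by
    rw [Matrix.trace_kronecker, hNtr, mul_one]
  have hσS : ((N ⊗ₖ N) * swapOp (2^n)).trace = (N * N).trace := by
    rw [Matrix.trace_mul_comm, trace_swap_mul_kron]
  have hσG : ((N ⊗ₖ N) * GD (2^n)).trace = ((2^n : ℕ):ℂ) * (N * N).trace - 1 := by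
    rw [GD, Matrix.mul_sub, Matrix.mul_one, Matrix.trace_sub, Matrix.mul_smul, Matrix.trace_smul,
      hσS, hkron, smul_eq_mul]
  have hSG : (swapOp (2^n) * GD (2^n)).trace
      = ((2^n : ℕ):ℂ) * (((2^n : ℕ):ℂ) * ((2^n : ℕ):ℂ)) - ((2^n : ℕ):ℂ) := by
    rw [GD, Matrix.mul_sub, Matrix.mul_one, Matrix.trace_sub, Matrix.mul_smul, Matrix.trace_smul,
      swap_mul_swap, trace_swap, Matrix.trace_one, smul_eq_mul]
    simp
  have key : (swapOp (2^n) * CdepD (2^n) (N ⊗ₖ N)).trace = (N * N).trace := by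
    rw [CdepD, Matrix.mul_add, Matrix.mul_smul, Matrix.mul_smul, Matrix.mul_smul, Matrix.mul_smul,
      Matrix.mul_one, Matrix.trace_add, Matrix.trace_smul, Matrix.trace_smul, Matrix.trace_smul,
      Matrix.trace_smul, hkron, trace_swap, hσG, hSG, smul_eq_mul, smul_eq_mul, smul_eq_mul,
      smul_eq_mul]
    simp only [Complex.ofReal_inv, Complex.ofReal_mul, Complex.ofReal_pow,
      Complex.ofReal_natCast, Complex.ofReal_sub, Complex.ofReal_one]
    revert hdC hC1
    generalize ((2^n : ℕ) : ℂ) = c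
    intro hdC hC1
    field_simp
    ring
  rw [key, hNN]
  have h2 : ((2:ℂ))^n = ((2^n : ℕ) : ℂ) := by push_cast; ring
  simp only [Complex.ofReal_div, Complex.ofReal_inv, Complex.ofReal_mul, Complex.ofReal_pow,
    Complex.ofReal_natCast, Complex.ofReal_sub, Complex.ofReal_one, Complex.ofReal_ofNat]
  rw [h2]
  revert hdC hεC
  generalize ((2^n : ℕ) : ℂ) = c
  intro hdC hεC
  field_simp
  ring
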